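/- The rational function d(C) = C(5C+22)/(10−C) takes a positive integer value at exactly 21 positive rational values of C, namely C ∈ {2/5, 1, 2, 14/5, 4, 5, 26/5, 6, 32/5, 34/5, 7, 38/5, 8, 41/5, 42/5, 44/5, 9, 46/5, 47/5, 48/5, 49/5}. -/

import Mathlib

set_option maxHeartbeats 1000000


/-- The rational function `d(C) = C(5C+22)/(10-C)` takes a positive integer value at
exactly 21 positive rational values of `C`. -/
theorem deligne_dimension_values (C : ℚ) (hC : 0 < C) :
    (∃ n : ℤ, 0 < n ∧ C * (5 * C + 22) / (10 - C) = (n : ℚ)) ↔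
      C ∈ ({2/5, 1, 2, 14/5, 4, 5, 26/5, 6, 32/5, 34/5, 7, 38/5, 8, 41/5, 42/5,
        44/5, 9, 46/5, 47/5, 48/5, 49/5} : Set ℚ) := by
  constructor
  · rintro ⟨n, hn, hE⟩
    -- first: 10 - C > 0
    have hnum : 0 < C * (5 * C + 22) := by positivity
    have h10 : C < 10 := by
      by_contra h
      push_neg at h
      rcases eq_or_lt_of_le h with h' | h'
      · rw [← h'] at hE; simp at hE
        have hne : (n:ℚ) ≠ 0 := by exact_mod_cast hn.ne'
        exact hne hE.symm
      · have hd : 10 - C < 0 := by linarith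
        have : C * (5 * C + 22) / (10 - C) < 0 := div_neg_of_pos_of_neg hnum hd
        rw [hE] at this
        have : (0:ℚ) < n := by exact_mod_cast hn
        linarith
    have hd : (0:ℚ) < 10 - C := by linarith
    have hE' : C * (5 * C + 22) = (n : ℚ) * (10 - C) := by
      field_simp at hE
      linarith [hE]
    -- denominator divides 5
    set a : ℤ := C.num with ha
    set b : ℤ := (C.den : ℤ) with hb
    have hb0 : (b : ℚ) ≠ 0 := by
      simp [hb]
    have haC : (a : ℚ) = C * b := by
      rw [ha, hb]
      field_simp
      exact_mod_cast (Rat.mul_den_eq_num C).symm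
    have key : 5*a^2 + 22*a*b + n*a*b - 10*n*b^2 = 0 := by
      have : ((5*a^2 + 22*a*b + n*a*b - 10*n*b^2 : ℤ) : ℚ) = 0 := by
        push_cast
        rw [haC]
        linear_combination (b:ℚ)^2 * hE'
      exact_mod_cast this
    have hdvd : b ∣ 5 * a^2 := ⟨10*n*b - 22*a - n*a, by linarith [key, mul_comm b (10*n*b - 22*a - n*a)]⟩
    have hdn : C.den ∣ 5 * a.natAbs^2 := by
      have := Int.natAbs_dvd_natAbs.mpr hdvd
      simpa [hb, Int.natAbs_mul, Int.natAbs_pow, mul_comm] using this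
    have hcop : Nat.Coprime C.den (a.natAbs^2) := (C.reduced.symm).pow_right 2
    have hd5 : C.den ∣ 5 := hcop.dvd_of_dvd_mul_left (by rwa [mul_comm] at hdn)
    have hden : C.den = 1 ∨ C.den = 5 := (Nat.dvd_prime (by norm_num)).mp hd5
    obtain ⟨m, hm⟩ : ∃ m : ℤ, (m : ℚ) = 5 * C := by
      rcases hden with h | h
      · exact ⟨5 * a, by push_cast; rw [haC, hb, h]; push_cast; ring⟩
      · exact ⟨a, by rw [haC, hb, h]; push_cast; ring⟩
    have hm0 : 0 < m := by
      have : (0:ℚ) < (m:ℚ) := by rw [hm]; linarith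
      exact_mod_cast this
    have hm50 : m < 50 := by
      have : (m:ℚ) < 50 := by rw [hm]; linarith
      exact_mod_cast this
    have hEq : m * (m + 22) = n * (50 - m) := by
      have hq : (m:ℚ) * ((m:ℚ) + 22) = (n:ℚ) * (50 - (m:ℚ)) := by
        rw [hm]; linear_combination 5 * hE'
      exact_mod_cast hq
    have hk : (50 - m) ∣ 3600 := ⟨n + 122 - (50 - m), by linear_combination hEq⟩
    have hC5 : C = (m:ℚ) / 5 := by
      rw [eq_div_iff (by norm_num : (5:ℚ) ≠ 0)]; linarith [hm]
    clear_value a b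
    clear hE hE' key hdvd hdn hcop hd5 hden hm haC hEq hnum hC hd h10 hb0 ha hb a b
    subst hC5
    interval_cases m <;>
      first
        | (exfalso; omega)
        | (simp only [Set.mem_insert_iff, Set.mem_singleton_iff]; norm_num)
  · intro h
    simp only [Set.mem_insert_iff, Set.mem_singleton_iff] at h
    rcases h with rfl|rfl|rfl|rfl|rfl|rfl|rfl|rfl|rfl|rfl|rfl|rfl|rfl|rfl|rfl|rfl|rfl|rfl|rfl|rfl|rfl
    · exact ⟨1, by norm_num⟩
    · exact ⟨3, by norm_num⟩
    · exact ⟨8, by norm_num⟩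
    · exact ⟨14, by norm_num⟩
    · exact ⟨28, by norm_num⟩
    · exact ⟨47, by norm_num⟩
    · exact ⟨52, by norm_num⟩
    · exact ⟨78, by norm_num⟩
    · exact ⟨96, by norm_num⟩
    · exact ⟨119, by norm_num⟩
    · exact ⟨133, by norm_num⟩
    · exact ⟨190, by norm_num⟩
    · exact ⟨248, by norm_num⟩
    · exact ⟨287, by norm_num⟩
    · exact ⟨336, by norm_num⟩
    · exact ⟨484, by norm_num⟩
    · exact ⟨603, by norm_num⟩
    · exact ⟨782, by norm_num⟩
    · exact ⟨1081, by norm_num⟩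
    · exact ⟨1680, by norm_num⟩
    · exact ⟨3479, by norm_num⟩
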